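/- Let (V; f, g) be a dual-modular instance and θ : ℝ≥0 → ℝ a strictly convex function. An allocation (x, y) ∈ B≥_f × B≤_g minimizes D_θ(x ‖ y) over all allocations if and only if it is locally maximin. Moreover, if θ is merely convex (not necessarily strictly), every locally maximin allocation is still a minimizer of D_θ over all allocations. -/

import Mathlib

open Finset

variable {V : Type*} [Fintype V] [DecidableEq V]

/-- A set function is supermodular. -/
def Supermodular (f : Finset V → ℝ) : Prop :=
  ∀ A B : Finset V, f A + f B ≤ f (A ∩ B) + f (A ∪ B)

/-- A set function is submodular. -/
def Submodular (g : Finset V → ℝ) : Prop :=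
  ∀ A B : Finset V, g (A ∩ B) + g (A ∪ B) ≤ g A + g B

/-- A set function is monotone. -/
def MonotoneFn (f : Finset V → ℝ) : Prop :=
  ∀ A B : Finset V, A ⊆ B → f A ≤ f B

/-- A set function is strictly monotone. -/
def StrictMonoFn (g : Finset V → ℝ) : Prop :=
  ∀ A B : Finset V, A ⊂ B → g A < g B

/-- A dual-modular instance `(V; f, g)`: `f` is a nonnegative monotone supermodular
reward function, `g` is a nonnegative strictly monotone submodular cost function,
both vanishing on the empty set. -/
structure DualModular (f g : Finset V → ℝ) : Prop where
  f_nonneg : ∀ A, 0 ≤ f A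
  g_nonneg : ∀ A, 0 ≤ g A
  f_empty : f ∅ = 0
  g_empty : g ∅ = 0
  f_mono : MonotoneFn f
  g_strictMono : StrictMonoFn g
  f_supermodular : Supermodular f
  g_submodular : Submodular g

/-- Density of a subset. -/
noncomputable def density (f g : Finset V → ℝ) (S : Finset V) : ℝ := f S / g S

/-- Marginal contribution `h(S|A) = h(S ∪ A) - h(A)`. -/
def marginal (h : Finset V → ℝ) (S A : Finset V) : ℝ := h (S ∪ A) - h A

/-- Marginal density `ρ(S|A) = f(S|A)/g(S|A)`. -/
noncomputable def margDensity (f g : Finset V → ℝ) (S A : Finset V) : ℝ :=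
  marginal f S A / marginal g S A

/-- `S_{<i}`: the union of earlier parts in an indexed family. -/
def below {k : ℕ} (S : Fin k → Finset V) (i : Fin k) : Finset V :=
  (Finset.univ.filter (fun j => j < i)).biUnion S

/-- The density decomposition `V = S₁ ∪ … ∪ S_k`: each `S i` is a nonempty maximal
densest subset of the remaining instance with marginal functions. -/
structure IsDensityDecomposition (f g : Finset V → ℝ) {k : ℕ} (S : Fin k → Finset V) :
    Prop where
  nonempty : ∀ i, (S i).Nonempty
  disj : ∀ i, Disjoint (S i) (below S i)
  cover : Finset.univ.biUnion S = (Finset.univ : Finset V)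
  maxDensity : ∀ i, ∀ T : Finset V, T.Nonempty → Disjoint T (below S i) →
    margDensity f g T (below S i) ≤ margDensity f g (S i) (below S i)
  maximal : ∀ i, ∀ T : Finset V, T.Nonempty → Disjoint T (below S i) →
    margDensity f g (S i) (below S i) ≤ margDensity f g T (below S i) → T ⊆ S i

/-- `ρ_i`, the density of the `i`-th component of the decomposition. -/
noncomputable def decompDensity (f g : Finset V → ℝ) {k : ℕ} (S : Fin k → Finset V)
    (i : Fin k) : ℝ :=
  margDensity f g (S i) (below S i)

/-- Membership in the base contrapolymatroid `B≥_f`. -/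
def memBf (f : Finset V → ℝ) (x : V → ℝ) : Prop :=
  (∀ v, 0 ≤ x v) ∧ (∑ v, x v = f Finset.univ) ∧ ∀ A : Finset V, f A ≤ ∑ v ∈ A, x v

/-- Membership in the base polymatroid `B≤_g`. -/
def memBg (g : Finset V → ℝ) (y : V → ℝ) : Prop :=
  (∀ v, 0 ≤ y v) ∧ (∑ v, y v = g Finset.univ) ∧ ∀ A : Finset V, ∑ v ∈ A, y v ≤ g A

/-- An allocation is a pair `(x, y) ∈ B≥_f × B≤_g`. -/
def Allocation (f g : Finset V → ℝ) (x y : V → ℝ) : Prop := memBf f x ∧ memBg g y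

/-- The locally maximin condition for an allocation. -/
def LocallyMaximin (f g : Finset V → ℝ) (x y : V → ℝ) : Prop :=
  ∀ ρ : ℝ, 0 < ρ →
    (∑ v ∈ Finset.univ.filter (fun v => ρ ≤ x v / y v), x v
       = f (Finset.univ.filter (fun v => ρ ≤ x v / y v))) ∧
    (∑ v ∈ Finset.univ.filter (fun v => ρ ≤ x v / y v), y v
       = g (Finset.univ.filter (fun v => ρ ≤ x v / y v)))

/-- The multiset of induced densities, sorted in non-increasing order. -/
noncomputable def sortedDensities (x y : V → ℝ) : List ℝ :=
  ((Finset.univ.val.map (fun v => x v / y v)).sort (· ≤ ·)).reverse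

/-- An allocation is lexicographically optimal if its non-increasingly sorted density
vector is lexicographically minimal among all allocations. -/
def LexOptimal (f g : Finset V → ℝ) (x y : V → ℝ) : Prop :=
  Allocation f g x y ∧
  ∀ x' y' : V → ℝ, Allocation f g x' y' → sortedDensities x y ≤ sortedDensities x' y'

/-- The hockey-stick divergence `HS_γ(x ‖ y)`. -/
noncomputable def HS (γ : ℝ) (x y : V → ℝ) : ℝ := ∑ u, max (x u - γ * y u) 0

/-- The `θ`-divergence `D_θ(x ‖ y) = Σ_u y_u · θ(x_u / y_u)`. -/
noncomputable def Dtheta (θ : ℝ → ℝ) (x y : V → ℝ) : ℝ := ∑ u, y u * θ (x u / y u)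

/-- Permutations of `V`, encoded as bijections to positions `Fin |V|`;
`u ≺_σ v` iff `σ u < σ v`. -/
abbrev Perms (V : Type*) [Fintype V] := V ≃ Fin (Fintype.card V)

/-- `h^σ(u)`: the marginal contribution of `u` given the elements preceding it in `σ`. -/
def permVal (h : Finset V → ℝ) (σ : Perms V) (u : V) : ℝ :=
  h (insert u (Finset.univ.filter (fun w => σ w < σ u))) -
    h (Finset.univ.filter (fun w => σ w < σ u))

/-- A probability distribution on permutations of `V`. -/
def IsDist (p : Perms V → ℝ) : Prop := (∀ σ, 0 ≤ p σ) ∧ ∑ σ, p σ = 1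

/-- `h^p(u) = Σ_σ p_σ · h^σ(u)`. -/
noncomputable def distVal (h : Finset V → ℝ) (p : Perms V → ℝ) (u : V) : ℝ :=
  ∑ σ, p σ * permVal h σ u

/-- The density induced by a solution `(p, q)`. -/
noncomputable def solDensity (f g : Finset V → ℝ) (p q : Perms V → ℝ) (v : V) : ℝ :=
  distVal f p v / distVal g q v

/-- A solution `(p, q)` is locally maximin if whenever `u` has strictly larger induced
density than `v`, every permutation with positive weight puts `u` before `v`. -/
def LocallyMaximinSol (f g : Finset V → ℝ) (p q : Perms V → ℝ) : Prop :=
  ∀ u v : V, solDensity f g p q v < solDensity f g p q u →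
    ∀ σ : Perms V, (0 < p σ ∨ 0 < q σ) → σ u < σ v

/-- The convex-program objective `Φ_θ(p, q) = D_θ(f^p ‖ g^q)`. -/
noncomputable def Phi (θ : ℝ → ℝ) (f g : Finset V → ℝ) (p q : Perms V → ℝ) : ℝ :=
  Dtheta θ (distVal f p) (distVal g q)


namespace DMAux

/-- slope of a secant of θ. -/
noncomputable def sl (θ : ℝ → ℝ) (p q : ℝ) : ℝ := (θ q - θ p) / (q - p)

lemma sl_comm (θ : ℝ → ℝ) (p q : ℝ) : sl θ p q = sl θ q p := by
  unfold sl
  rcases eq_or_ne p q with rfl | h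
  · rfl
  · rw [← neg_div_neg_eq]; ring_nf

lemma sl_mul (θ : ℝ → ℝ) {p q : ℝ} (h : p ≠ q) : (q - p) * sl θ p q = θ q - θ p := by
  have h2 : q - p ≠ 0 := sub_ne_zero.mpr (Ne.symm h)
  unfold sl; rw [mul_comm, div_mul_cancel₀ _ h2]

lemma sl_le_sl {θ : ℝ → ℝ} (hθ : ConvexOn ℝ (Set.Ici 0) θ) {a b c d : ℝ}
    (ha : 0 ≤ a) (hab : a < b) (hbc : b ≤ c) (hcd : c < d) : sl θ a b ≤ sl θ c d := by
  have hb : (0:ℝ) ≤ b := le_of_lt (lt_of_le_of_lt ha hab)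
  have hc : (0:ℝ) ≤ c := le_trans hb hbc
  have hd : (0:ℝ) ≤ d := le_of_lt (lt_of_le_of_lt hc hcd)
  have h1 : sl θ a b ≤ sl θ a c :=
    hθ.secant_mono ha hb hc (ne_of_gt hab) (ne_of_gt (lt_of_lt_of_le hab hbc)) hbc
  have h2 : sl θ c a ≤ sl θ c d :=
    hθ.secant_mono hc ha hd (ne_of_lt (lt_of_lt_of_le hab hbc))
      (ne_of_gt hcd) (le_of_lt (lt_of_le_of_lt (le_trans (le_of_lt hab) hbc) hcd))
  calc sl θ a b ≤ sl θ a c := h1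
    _ = sl θ c a := sl_comm θ a c
    _ ≤ sl θ c d := h2

lemma sl_lt_sl {θ : ℝ → ℝ} (hθ : StrictConvexOn ℝ (Set.Ici 0) θ) {a b c d : ℝ}
    (ha : 0 ≤ a) (hab : a < b) (hbc : b ≤ c) (hcd : c < d) : sl θ a b < sl θ c d := by
  have hb : (0:ℝ) ≤ b := le_of_lt (lt_of_le_of_lt ha hab)
  have hc : (0:ℝ) ≤ c := le_trans hb hbc
  have hd : (0:ℝ) ≤ d := le_of_lt (lt_of_le_of_lt hc hcd)
  have h1 : sl θ a b ≤ sl θ a c :=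
    hθ.convexOn.secant_mono ha hb hc (ne_of_gt hab) (ne_of_gt (lt_of_lt_of_le hab hbc)) hbc
  have h2 : sl θ c a < sl θ c d :=
    hθ.secant_strict_mono hc ha hd (ne_of_lt (lt_of_lt_of_le hab hbc))
      (ne_of_gt hcd) (lt_of_le_of_lt (le_trans (le_of_lt hab) hbc) hcd)
  calc sl θ a b ≤ sl θ a c := h1
    _ = sl θ c a := sl_comm θ a c
    _ < sl θ c d := h2

lemma sl_lt_left {θ : ℝ → ℝ} (hθ : StrictConvexOn ℝ (Set.Ici 0) θ) {a b c : ℝ}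
    (hc : 0 ≤ c) (hca : c < a) (hab : a < b) : sl θ c b < sl θ a b := by
  have ha : (0:ℝ) ≤ a := le_of_lt (lt_of_le_of_lt hc hca)
  have hb : (0:ℝ) ≤ b := le_of_lt (lt_of_le_of_lt ha hab)
  have := hθ.secant_strict_mono hb hc ha (ne_of_lt (lt_trans hca hab))
    (ne_of_lt hab) hca
  calc sl θ c b = sl θ b c := sl_comm θ c b
    _ < sl θ b a := this
    _ = sl θ a b := sl_comm θ b a

end DMAux

section DMAux2
set_option linter.unusedSectionVars false

variable {V : Type*} [Fintype V] [DecidableEq V]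

namespace DMAux

lemma y_pos {g : Finset V → ℝ} (hg : StrictMonoFn g) {y : V → ℝ} (hy : memBg g y) (v : V) :
    0 < y v := by
  obtain ⟨hy0, hyV, hyA⟩ := hy
  have h1 : ∑ w ∈ Finset.univ.erase v, y w ≤ g (Finset.univ.erase v) := hyA _
  have h2 : g (Finset.univ.erase v) < g Finset.univ :=
    hg _ _ (Finset.erase_ssubset (Finset.mem_univ v))
  have h3 : ∑ w ∈ Finset.univ.erase v, y w + y v = ∑ w, y w :=
    Finset.sum_erase_add _ _ (Finset.mem_univ v)
  have := hyV
  linarith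

lemma dens_nonneg {x y : V → ℝ} (hx : ∀ v, 0 ≤ x v) (hy : ∀ v, 0 ≤ y v) (v : V) :
    0 ≤ x v / y v := div_nonneg (hx v) (hy v)

/-- lower bound on hockey stick for any allocation -/
lemma HS_lower {f g : Finset V → ℝ} {x y : V → ℝ} (hxy : Allocation f g x y)
    {γ : ℝ} (hγ : 0 ≤ γ) (S : Finset V) : f S - γ * g S ≤ HS γ x y := by
  obtain ⟨⟨hx0, hxV, hxA⟩, ⟨hy0, hyV, hyA⟩⟩ := hxy
  have h1 : ∑ u ∈ S, (x u - γ * y u) ≤ ∑ u ∈ S, max (x u - γ * y u) 0 :=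
    Finset.sum_le_sum fun u _ => le_max_left _ _
  have h2 : ∑ u ∈ S, max (x u - γ * y u) 0 ≤ HS γ x y :=
    Finset.sum_le_sum_of_subset_of_nonneg (Finset.subset_univ S)
      (fun u _ _ => le_max_right _ _)
  have h3 : ∑ u ∈ S, (x u - γ * y u) = ∑ u ∈ S, x u - γ * ∑ u ∈ S, y u := by
    rw [Finset.sum_sub_distrib, Finset.mul_sum]
  have h4 : f S ≤ ∑ u ∈ S, x u := hxA S
  have h5 : γ * ∑ u ∈ S, y u ≤ γ * g S := by
    have := hyA S; nlinarith
  linarith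

/-- hockey stick at 0 equals f(V) for any allocation -/
lemma HS_zero {f g : Finset V → ℝ} {x y : V → ℝ} (hxy : Allocation f g x y) :
    HS 0 x y = f Finset.univ := by
  obtain ⟨⟨hx0, hxV, hxA⟩, _⟩ := hxy
  unfold HS
  rw [← hxV]
  exact Finset.sum_congr rfl fun u _ => by
    rw [zero_mul, sub_zero, max_eq_left (hx0 u)]

/-- hockey stick vanishes above all densities -/
lemma HS_top {x y : V → ℝ} (hy : ∀ v, 0 < y v) {γ : ℝ}
    (hγ : ∀ v, x v / y v ≤ γ) : HS γ x y = 0 := by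
  unfold HS
  refine Finset.sum_eq_zero fun u _ => ?_
  have := (div_le_iff₀ (hy u)).mp (hγ u)
  rw [max_eq_right]; linarith

/-- For a locally maximin allocation, HS attains the lower bound. -/
lemma HS_maximin {f g : Finset V → ℝ} {x y : V → ℝ} (hy : ∀ v, 0 < y v)
    (hlm : LocallyMaximin f g x y) {γ : ℝ} (hγ : 0 < γ) :
    HS γ x y = f (Finset.univ.filter (fun v => γ ≤ x v / y v))
      - γ * g (Finset.univ.filter (fun v => γ ≤ x v / y v)) := by
  set S := Finset.univ.filter (fun v => γ ≤ x v / y v) with hS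
  obtain ⟨hfS, hgS⟩ := hlm γ hγ
  have key : HS γ x y = ∑ u ∈ S, (x u - γ * y u) := by
    unfold HS
    rw [← Finset.sum_filter_add_sum_filter_not Finset.univ (fun v => γ ≤ x v / y v)]
    have e1 : ∀ u ∈ S, max (x u - γ * y u) 0 = x u - γ * y u := by
      intro u hu
      rw [hS, Finset.mem_filter] at hu
      have := (le_div_iff₀ (hy u)).mp hu.2
      rw [max_eq_left]; linarith
    have e2 : ∑ u ∈ Finset.univ.filter (fun v => ¬ γ ≤ x v / y v),
        max (x u - γ * y u) 0 = 0 := by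
      refine Finset.sum_eq_zero fun u hu => ?_
      rw [Finset.mem_filter] at hu
      have h2 : x u / y u < γ := lt_of_not_ge hu.2
      have := (div_lt_iff₀ (hy u)).mp h2
      rw [max_eq_right]; linarith
    rw [e2, add_zero]
    exact Finset.sum_congr rfl e1
  rw [key, Finset.sum_sub_distrib, ← Finset.mul_sum, hfS, hgS]

end DMAux

end DMAux2

section DMAux3
set_option linter.unusedSectionVars false

variable {V : Type*} [Fintype V] [DecidableEq V]

namespace DMAux

lemma pl_identity (θ : ℝ → ℝ) (t : ℕ → ℝ) (n : ℕ)
    (hmono : ∀ j k, j < k → k < n → t j < t k) {l : ℕ} (hl : l < n) :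
    θ (t l) = θ (t 0) + ∑ j ∈ Finset.range (n - 1),
      sl θ (t j) (t (j + 1)) * (max (t l - t j) 0 - max (t l - t (j + 1)) 0) := by
  have hmono' : ∀ j k, j ≤ k → k < n → t j ≤ t k := by
    intro j k hjk hk
    rcases eq_or_lt_of_le hjk with rfl | h
    · exact le_refl _
    · exact le_of_lt (hmono j k h hk)
  have key : ∀ j ∈ Finset.range (n - 1),
      sl θ (t j) (t (j + 1)) * (max (t l - t j) 0 - max (t l - t (j + 1)) 0)
        = θ (t (min (j + 1) l)) - θ (t (min j l)) := by
    intro j hj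
    rw [Finset.mem_range] at hj
    have hjn : j + 1 < n := by omega
    rcases lt_or_ge j l with hjl | hlj
    · -- j < l
      have h1 : min j l = j := min_eq_left (le_of_lt hjl)
      have h2 : min (j + 1) l = j + 1 := min_eq_left (by omega)
      have h3 : t j < t (j + 1) := hmono j (j + 1) (by omega) hjn
      have h4 : t (j + 1) ≤ t l := hmono' (j + 1) l (by omega) hl
      have h5 : max (t l - t j) 0 = t l - t j := max_eq_left (by linarith)
      have h6 : max (t l - t (j + 1)) 0 = t l - t (j + 1) := max_eq_left (by linarith)
      rw [h1, h2, h5, h6]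
      have : t l - t j - (t l - t (j + 1)) = t (j + 1) - t j := by ring
      rw [this, mul_comm, sl_mul θ (ne_of_lt h3)]
    · -- l ≤ j
      have h1 : min j l = l := min_eq_right hlj
      have h2 : min (j + 1) l = l := min_eq_right (by omega)
      have h3 : t l ≤ t j := hmono' l j hlj (by omega)
      have h4 : t l ≤ t (j + 1) := hmono' l (j + 1) (by omega) hjn
      have h5 : max (t l - t j) 0 = 0 := max_eq_right (by linarith)
      have h6 : max (t l - t (j + 1)) 0 = 0 := max_eq_right (by linarith)
      rw [h1, h2, h5, h6]
      ring
  rw [Finset.sum_congr rfl key, Finset.sum_range_sub (fun j => θ (t (min j l)))]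
  have e0 : min 0 l = 0 := Nat.min_eq_left (Nat.zero_le l)
  have e1 : min (n - 1) l = l := min_eq_right (by omega)
  rw [e0, e1]
  ring

lemma Dtheta_repr (θ : ℝ → ℝ) (t : ℕ → ℝ) (n : ℕ)
    (hmono : ∀ j k, j < k → k < n → t j < t k)
    (w z : V → ℝ) (hz : ∀ v, 0 < z v)
    (hmem : ∀ v, ∃ l, l < n ∧ t l = w v / z v) :
    Dtheta θ w z = θ (t 0) * (∑ v, z v) + ∑ j ∈ Finset.range (n - 1),
      sl θ (t j) (t (j + 1)) * (HS (t j) w z - HS (t (j + 1)) w z) := by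
  have hv : ∀ v : V, z v * θ (w v / z v)
      = z v * θ (t 0) + ∑ j ∈ Finset.range (n - 1), sl θ (t j) (t (j + 1))
        * (max (w v - t j * z v) 0 - max (w v - t (j + 1) * z v) 0) := by
    intro v
    obtain ⟨l, hl, hr⟩ := hmem v
    have hzv := hz v
    have hmax : ∀ γ : ℝ, z v * max (w v / z v - γ) 0 = max (w v - γ * z v) 0 := by
      intro γ
      rw [mul_max_of_nonneg _ _ (le_of_lt hzv), mul_zero]
      congr 1
      field_simp
    rw [← hr, pl_identity θ t n hmono hl, mul_add, Finset.mul_sum]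
    congr 1
    refine Finset.sum_congr rfl fun j _ => ?_
    rw [hr]
    have : z v * (sl θ (t j) (t (j + 1)) * (max (w v / z v - t j) 0
        - max (w v / z v - t (j + 1)) 0))
        = sl θ (t j) (t (j + 1)) * (z v * max (w v / z v - t j) 0
          - z v * max (w v / z v - t (j + 1)) 0) := by ring
    rw [this, hmax, hmax]
  unfold Dtheta
  rw [Finset.sum_congr rfl (fun v _ => hv v), Finset.sum_add_distrib]
  congr 1
  · rw [← Finset.sum_mul, mul_comm]
  · rw [Finset.sum_comm]
    refine Finset.sum_congr rfl fun j _ => ?_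
    rw [← Finset.mul_sum]
    congr 1
    unfold HS
    rw [← Finset.sum_sub_distrib]

end DMAux

end DMAux3

section DMAux4
set_option linter.unusedSectionVars false

variable {V : Type*} [Fintype V] [DecidableEq V]

namespace DMAux

/-- Every locally maximin allocation minimizes `D_θ` for convex `θ`. -/
lemma maximin_min {f g : Finset V → ℝ} (hdm : DualModular f g) {θ : ℝ → ℝ}
    (hθ : ConvexOn ℝ (Set.Ici 0) θ) {x y x' y' : V → ℝ}
    (hxy : Allocation f g x y) (hlm : LocallyMaximin f g x y)
    (hxy' : Allocation f g x' y') : Dtheta θ x y ≤ Dtheta θ x' y' := by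
  classical
  have hy : ∀ v, 0 < y v := y_pos hdm.g_strictMono hxy.2
  have hy' : ∀ v, 0 < y' v := y_pos hdm.g_strictMono hxy'.2
  set K : Finset ℝ := insert (0:ℝ)
    ((Finset.univ.image fun v => x v / y v) ∪ (Finset.univ.image fun v => x' v / y' v))
    with hK
  have hK0 : (0:ℝ) ∈ K := Finset.mem_insert_self _ _
  have hKd : ∀ v, x v / y v ∈ K := fun v =>
    Finset.mem_insert_of_mem (Finset.mem_union_left _
      (Finset.mem_image_of_mem _ (Finset.mem_univ v)))
  have hKd' : ∀ v, x' v / y' v ∈ K := fun v =>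
    Finset.mem_insert_of_mem (Finset.mem_union_right _
      (Finset.mem_image_of_mem _ (Finset.mem_univ v)))
  have hKnonneg : ∀ r ∈ K, (0:ℝ) ≤ r := by
    intro r hr
    rw [hK, Finset.mem_insert, Finset.mem_union] at hr
    rcases hr with rfl | hr | hr
    · exact le_refl 0
    · obtain ⟨v, _, rfl⟩ := Finset.mem_image.mp hr
      exact div_nonneg (hxy.1.1 v) (le_of_lt (hy v))
    · obtain ⟨v, _, rfl⟩ := Finset.mem_image.mp hr
      exact div_nonneg (hxy'.1.1 v) (le_of_lt (hy' v))
  set L : List ℝ := K.sort (· ≤ ·) with hL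
  set n : ℕ := L.length with hn
  set t : ℕ → ℝ := fun j => L.getD j 0 with ht
  have hnpos : 0 < n := by
    rw [hn, hL, Finset.length_sort]
    exact Finset.card_pos.mpr ⟨0, hK0⟩
  have htK : ∀ j, j < n → t j ∈ K := by
    intro j hj
    rw [ht]
    simp only
    rw [List.getD_eq_getElem (l := L) (d := 0) hj]
    exact (Finset.mem_sort _).mp (L.get_mem ⟨j, hj⟩)
  have hmemt : ∀ r ∈ K, ∃ l, l < n ∧ t l = r := by
    intro r hr
    obtain ⟨i, hi⟩ := List.mem_iff_get.mp ((Finset.mem_sort (α := ℝ) (· ≤ ·)).mpr hr)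
    exact ⟨i.1, i.2, by rw [ht]; simp only; rw [List.getD_eq_getElem (l := L) (d := 0) i.2]; exact hi⟩
  have hmono : ∀ j k, j < k → k < n → t j < t k := by
    intro j k hjk hk
    have hj : j < n := lt_trans hjk hk
    rw [ht]
    simp only
    rw [List.getD_eq_getElem (l := L) (d := 0) hj, List.getD_eq_getElem (l := L) (d := 0) hk]
    exact (Finset.sortedLT_sort K).getElem_lt_getElem_of_lt hjk
  have hmono' : ∀ j k, j ≤ k → k < n → t j ≤ t k := by
    intro j k hjk hk
    rcases eq_or_lt_of_le hjk with rfl | h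
    · exact le_refl _
    · exact le_of_lt (hmono j k h hk)
  have ht0 : t 0 = 0 := by
    obtain ⟨l, hl, hlt⟩ := hmemt 0 hK0
    have h1 : t 0 ≤ t l := hmono' 0 l (Nat.zero_le l) hl
    have h2 : 0 ≤ t 0 := hKnonneg _ (htK 0 hnpos)
    rw [hlt] at h1
    linarith
  have htop : ∀ r ∈ K, r ≤ t (n - 1) := by
    intro r hr
    obtain ⟨l, hl, hlt⟩ := hmemt r hr
    rw [← hlt]
    exact hmono' l (n - 1) (by omega) (by omega)
  -- the B sequence
  set B : ℕ → ℝ := fun j => HS (t j) x y - HS (t j) x' y' with hB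
  have hB0 : B 0 = 0 := by
    rw [hB]; simp only
    rw [ht0, HS_zero hxy, HS_zero hxy', sub_self]
  have hBtop : B (n - 1) = 0 := by
    rw [hB]; simp only
    rw [HS_top hy (fun v => htop _ (hKd v)), HS_top hy' (fun v => htop _ (hKd' v)), sub_self]
  have hBle : ∀ j, 0 < j → j < n → B j ≤ 0 := by
    intro j hj0 hjn
    have htpos : 0 < t j := by
      have := hmono 0 j hj0 hjn
      rwa [ht0] at this
    rw [hB]; simp only
    rw [HS_maximin hy hlm htpos]
    have := HS_lower hxy' (le_of_lt htpos)
      (Finset.univ.filter (fun v => t j ≤ x v / y v))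
    linarith
  -- representation of both divergences
  have hrep := Dtheta_repr θ t n hmono x y hy (fun v => hmemt _ (hKd v))
  have hrep' := Dtheta_repr θ t n hmono x' y' hy' (fun v => hmemt _ (hKd' v))
  have hsumy : ∑ v, y v = ∑ v, y' v := by rw [hxy.2.2.1, hxy'.2.2.1]
  set s : ℕ → ℝ := fun j => sl θ (t j) (t (j + 1)) with hs
  have hdiff : Dtheta θ x y - Dtheta θ x' y'
      = ∑ j ∈ Finset.range (n - 1), s j * (B j - B (j + 1)) := by
    have hterm : ∀ j, s j * (B j - B (j + 1))
        = sl θ (t j) (t (j + 1)) * (HS (t j) x y - HS (t (j + 1)) x y)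
          - sl θ (t j) (t (j + 1)) * (HS (t j) x' y' - HS (t (j + 1)) x' y') := by
      intro j; rw [hs, hB]; ring
    rw [hrep, hrep', hsumy, Finset.sum_congr rfl (fun j _ => hterm j),
      Finset.sum_sub_distrib]
    ring
  have habel : ∑ j ∈ Finset.range (n - 1), s j * (B j - B (j + 1))
      = (s 0 * B 0 - s (n - 1) * B (n - 1))
        + ∑ j ∈ Finset.range (n - 1), (s (j + 1) - s j) * B (j + 1) := by
    rw [← Finset.sum_range_sub' (fun j => s j * B j) (n - 1), ← Finset.sum_add_distrib]
    refine Finset.sum_congr rfl fun j _ => ?_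
    ring
  have hterm : ∀ j ∈ Finset.range (n - 1), (s (j + 1) - s j) * B (j + 1) ≤ 0 := by
    intro j hj
    rw [Finset.mem_range] at hj
    rcases eq_or_lt_of_le (Nat.succ_le_of_lt hj) with heq | hlt
    · -- j + 1 = n - 1
      rw [show j + 1 = n - 1 from heq, hBtop, mul_zero]
    · -- j + 1 < n - 1
      have hsle : s j ≤ s (j + 1) := by
        rw [hs]
        exact sl_le_sl hθ (hKnonneg _ (htK j (by omega)))
          (hmono j (j + 1) (by omega) (by omega)) (le_refl _)
          (hmono (j + 1) (j + 2) (by omega) (by omega))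
      have hBj : B (j + 1) ≤ 0 := hBle (j + 1) (by omega) (by omega)
      exact mul_nonpos_of_nonneg_of_nonpos (by linarith) hBj
  have : ∑ j ∈ Finset.range (n - 1), s j * (B j - B (j + 1)) ≤ 0 := by
    rw [habel, hB0, hBtop, mul_zero, mul_zero, sub_zero, zero_add]
    exact Finset.sum_nonpos hterm
  linarith [hdiff ▸ this]

end DMAux

end DMAux4

section DMAux5
set_option linter.unusedSectionVars false

variable {V : Type*} [Fintype V] [DecidableEq V]

namespace DMAux

/-- Exchange pair existence: if `S` is not `x`-tight, there are `u ∈ S`, `v ∉ S` such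
that every constraint separating `u` from `v` has slack. -/
lemma exists_exchange_x {f : Finset V → ℝ} (hsup : Supermodular f) (hf0 : f ∅ = 0)
    {x : V → ℝ} (hxV : ∑ v, x v = f Finset.univ) (hxA : ∀ A, f A ≤ ∑ v ∈ A, x v)
    {S : Finset V} (hS : f S < ∑ v ∈ S, x v) :
    ∃ u ∈ S, ∃ v, v ∉ S ∧ ∀ A : Finset V, u ∈ A → v ∉ A → f A < ∑ w ∈ A, x w := by
  classical
  by_contra hcon
  push_neg at hcon
  set tight : Finset V → Prop := fun A => f A = ∑ w ∈ A, x w with htight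
  have hpair : ∀ A B, tight A → tight B → tight (A ∩ B) ∧ tight (A ∪ B) := by
    intro A B hA hB
    have h1 := hsup A B
    have h2 := hxA (A ∩ B)
    have h3 := hxA (A ∪ B)
    have h4 : ∑ w ∈ A ∪ B, x w + ∑ w ∈ A ∩ B, x w = ∑ w ∈ A, x w + ∑ w ∈ B, x w :=
      Finset.sum_union_inter
    rw [htight] at *
    constructor <;> [skip; skip] <;> simp only <;> linarith
  have tight_univ : tight Finset.univ := hxV.symm
  have tight_empty : tight ∅ := by rw [htight]; simp [hf0]
  have tight_inf : ∀ (B : Finset V) (c : V → Finset V),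
      (∀ v ∈ B, tight (c v)) → tight (B.inf c) := by
    intro B
    induction B using Finset.induction_on with
    | empty => intro c _; rw [Finset.inf_empty, Finset.top_eq_univ]; exact tight_univ
    | insert a B hnotmem ih =>
      intro c hc
      rw [Finset.inf_insert, Finset.inf_eq_inter]
      exact (hpair _ _ (hc a (Finset.mem_insert_self a B))
        (ih c (fun v hv => hc v (Finset.mem_insert_of_mem hv)))).1
  have tight_sup : ∀ (B : Finset V) (c : V → Finset V),
      (∀ v ∈ B, tight (c v)) → tight (B.sup c) := by
    intro B
    induction B using Finset.induction_on with
    | empty => intro c _; rw [Finset.sup_empty, Finset.bot_eq_empty]; exact tight_empty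
    | insert a B hnotmem ih =>
      intro c hc
      rw [Finset.sup_insert, Finset.sup_eq_union]
      exact (hpair _ _ (hc a (Finset.mem_insert_self a B))
        (ih c (fun v hv => hc v (Finset.mem_insert_of_mem hv)))).2
  have mem_inf : ∀ (B : Finset V) (c : V → Finset V) (u : V),
      (∀ v ∈ B, u ∈ c v) → u ∈ B.inf c := by
    intro B
    induction B using Finset.induction_on with
    | empty => intro c u _; rw [Finset.inf_empty, Finset.top_eq_univ]; exact Finset.mem_univ u
    | insert a B hnotmem ih =>
      intro c u hc
      rw [Finset.inf_insert, Finset.inf_eq_inter, Finset.mem_inter]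
      exact ⟨hc a (Finset.mem_insert_self a B),
        ih c u (fun v hv => hc v (Finset.mem_insert_of_mem hv))⟩
  -- choose separating tight sets
  have h' : ∀ u v : V, ∃ A : Finset V,
      u ∈ S → v ∉ S → (u ∈ A ∧ v ∉ A ∧ tight A) := by
    intro u v
    by_cases hu : u ∈ S
    · by_cases hv : v ∉ S
      · obtain ⟨A, hA1, hA2, hA3⟩ := hcon u hu v hv
        exact ⟨A, fun _ _ => ⟨hA1, hA2, le_antisymm (hxA A) hA3⟩⟩
      · exact ⟨Finset.univ, fun _ h => absurd h hv⟩
    · exact ⟨Finset.univ, fun h _ => absurd h hu⟩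
  choose A hA using h'
  set C : V → Finset V := fun u => (Finset.univ \ S).inf (A u) with hC
  have hCtight : ∀ u ∈ S, tight (C u) := by
    intro u hu
    refine tight_inf _ _ fun v hv => ?_
    rw [Finset.mem_sdiff] at hv
    exact (hA u v hu hv.2).2.2
  have hCmem : ∀ u ∈ S, u ∈ C u := by
    intro u hu
    refine mem_inf _ _ _ fun v hv => ?_
    rw [Finset.mem_sdiff] at hv
    exact (hA u v hu hv.2).1
  have hCsub : ∀ u ∈ S, C u ⊆ S := by
    intro u hu w hw
    by_contra hwS
    have hmem : w ∈ Finset.univ \ S := Finset.mem_sdiff.mpr ⟨Finset.mem_univ w, hwS⟩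
    have : C u ⊆ A u w := Finset.inf_le hmem
    exact (hA u w hu hwS).2.1 (this hw)
  have hSsup : S = S.sup C := by
    apply Finset.Subset.antisymm
    · intro u hu
      exact Finset.mem_of_subset (Finset.le_sup hu) (hCmem u hu)
    · exact Finset.sup_le fun u hu => hCsub u hu
  have : tight S := by rw [hSsup]; exact tight_sup _ _ fun u hu => hCtight u hu
  have h2 : f S = ∑ w ∈ S, x w := this
  linarith

/-- Exchange pair existence, `y` side. -/
lemma exists_exchange_y {g : Finset V → ℝ} (hsub : Submodular g) (hg0 : g ∅ = 0)
    {y : V → ℝ} (hyV : ∑ v, y v = g Finset.univ) (hyA : ∀ A, ∑ v ∈ A, y v ≤ g A)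
    {S : Finset V} (hS : ∑ v ∈ S, y v < g S) :
    ∃ u ∈ S, ∃ v, v ∉ S ∧ ∀ A : Finset V, u ∈ A → v ∉ A → ∑ w ∈ A, y w < g A := by
  have hsup : Supermodular (fun A => -(g A)) := by
    intro A B
    have := hsub A B
    simp only
    linarith
  have h0 : (fun A => -(g A)) ∅ = 0 := by simp [hg0]
  have hxV : ∑ v, (-(y v)) = (fun A => -(g A)) Finset.univ := by
    simp only
    rw [← hyV, Finset.sum_neg_distrib]
  have hxA : ∀ A, (fun A => -(g A)) A ≤ ∑ v ∈ A, -(y v) := by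
    intro A
    simp only
    rw [Finset.sum_neg_distrib]
    exact neg_le_neg (hyA A)
  have hS' : (fun A => -(g A)) S < ∑ v ∈ S, -(y v) := by
    simp only
    rw [Finset.sum_neg_distrib]
    exact neg_lt_neg hS
  obtain ⟨u, hu, v, hv, hslack⟩ := exists_exchange_x hsup h0 hxV hxA hS'
  refine ⟨u, hu, v, hv, fun A hA1 hA2 => ?_⟩
  have := hslack A hA1 hA2
  simp only [Finset.sum_neg_distrib] at this
  linarith

end DMAux

end DMAux5

section DMAux6
set_option linter.unusedSectionVars false

variable {V : Type*} [Fintype V] [DecidableEq V]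

namespace DMAux

set_option maxHeartbeats 1000000 in
/-- If constraints separating `u` (denser) from `v` all have slack, the divergence can be
strictly decreased by moving `x`-mass from `u` to `v`. -/
lemma perturb_x {f g : Finset V → ℝ} (hdm : DualModular f g) {θ : ℝ → ℝ}
    (hθ : StrictConvexOn ℝ (Set.Ici 0) θ) {x y : V → ℝ}
    (hxy : Allocation f g x y) (hy : ∀ w, 0 < y w) {u v : V}
    (hρ : x v / y v < x u / y u)
    (hslack : ∀ A : Finset V, u ∈ A → v ∉ A → f A < ∑ w ∈ A, x w) :
    ∃ x'' : V → ℝ, Allocation f g x'' y ∧ Dtheta θ x'' y < Dtheta θ x y := by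
  classical
  obtain ⟨⟨hx0, hxV, hxA⟩, hg⟩ := hxy
  have huv : u ≠ v := by rintro rfl; exact lt_irrefl _ hρ
  have hyu := hy u
  have hyv := hy v
  have hxu : 0 < x u := by
    have h1 : 0 ≤ x v / y v := div_nonneg (hx0 v) (le_of_lt hyv)
    have h2 : 0 < x u / y u := lt_of_le_of_lt h1 hρ
    by_contra h
    push_neg at h
    have : x u / y u ≤ 0 := div_nonpos_of_nonpos_of_nonneg h (le_of_lt hyu)
    linarith
  set 𝒜 : Finset (Finset V) := Finset.univ.filter (fun A => u ∈ A ∧ v ∉ A) with h𝒜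
  have h𝒜ne : 𝒜.Nonempty := by
    refine ⟨{u}, ?_⟩
    rw [h𝒜, Finset.mem_filter]
    exact ⟨Finset.mem_univ _, Finset.mem_singleton_self u,
      fun h => huv (Finset.mem_singleton.mp h).symm⟩
  set ε : ℝ := 𝒜.inf' h𝒜ne (fun A => ∑ w ∈ A, x w - f A) with hε
  have hεpos : 0 < ε := by
    rw [hε, Finset.lt_inf'_iff]
    intro A hA
    rw [h𝒜, Finset.mem_filter] at hA
    have := hslack A hA.2.1 hA.2.2
    linarith
  set δ₂ : ℝ := (x u * y v - x v * y u) / (y u + y v) with hδ₂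
  have hnum : 0 < x u * y v - x v * y u := by
    rw [div_lt_div_iff₀ hyv hyu] at hρ
    linarith
  have hδ₂pos : 0 < δ₂ := div_pos hnum (by linarith)
  set δ : ℝ := min ε δ₂ with hδ
  have hδpos : 0 < δ := lt_min hεpos hδ₂pos
  have hδε : δ ≤ ε := min_le_left _ _
  have hδ₂le : δ ≤ δ₂ := min_le_right _ _
  set x'' : V → ℝ := fun w => x w + (if w = v then δ else 0) - (if w = u then δ else 0)
    with hx''
  have hx''u : x'' u = x u - δ := by rw [hx'']; simp [huv]
  have hx''v : x'' v = x v + δ := by rw [hx'']; simp [Ne.symm huv]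
  have hx''w : ∀ w, w ≠ u → w ≠ v → x'' w = x w := by
    intro w h1 h2; rw [hx'']; simp [h1, h2]
  have hδxu : δ ≤ x u := by
    have h1 : ε ≤ ∑ w ∈ {u}, x w - f {u} := by
      rw [hε]
      refine Finset.inf'_le _ ?_
      rw [h𝒜, Finset.mem_filter]
      exact ⟨Finset.mem_univ _, Finset.mem_singleton_self u,
        fun h => huv (Finset.mem_singleton.mp h).symm⟩
    rw [Finset.sum_singleton] at h1
    have := hdm.f_nonneg {u}
    linarith
  have hsum : ∀ A : Finset V, ∑ w ∈ A, x'' w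
      = ∑ w ∈ A, x w + (if v ∈ A then δ else 0) - (if u ∈ A then δ else 0) := by
    intro A
    rw [hx'']
    rw [Finset.sum_sub_distrib, Finset.sum_add_distrib]
    congr 1
    · congr 1
      exact Finset.sum_ite_eq' A v (fun _ => δ)
    · exact Finset.sum_ite_eq' A u (fun _ => δ)
  have halloc : Allocation f g x'' y := by
    refine ⟨⟨?_, ?_, ?_⟩, hg⟩
    · intro w
      rcases eq_or_ne w u with h1 | h1
      · rw [h1, hx''u]; linarith
      rcases eq_or_ne w v with h2 | h2
      · rw [h2, hx''v]; linarith [hx0 v]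
      · rw [hx''w w h1 h2]; exact hx0 w
    · rw [hsum Finset.univ]
      simp only [Finset.mem_univ, if_true]
      rw [hxV]; ring
    · intro A
      rw [hsum A]
      by_cases h1 : u ∈ A <;> by_cases h2 : v ∈ A <;>
        simp only [h1, h2, if_true, if_false]
      · have := hxA A; linarith
      · have hAmem : A ∈ 𝒜 := by
          rw [h𝒜, Finset.mem_filter]; exact ⟨Finset.mem_univ _, h1, h2⟩
        have : ε ≤ ∑ w ∈ A, x w - f A := Finset.inf'_le _ hAmem
        linarith
      · have := hxA A; linarith
      · have := hxA A; linarith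
  clear_value δ ε δ₂
  refine ⟨x'', halloc, ?_⟩
  -- now the strict decrease
  set a : ℝ := (x u - δ) / y u with ha
  set b : ℝ := x u / y u with hb
  set c : ℝ := x v / y v with hc
  set d : ℝ := (x v + δ) / y v with hd
  clear_value a b c d
  have hc0 : 0 ≤ c := by
    rw [hc]; exact div_nonneg (hx0 v) (le_of_lt hyv)
  have hcd : c < d := by
    rw [hc, hd]
    apply div_lt_div_of_pos_right _ hyv
    linarith
  have hda : d ≤ a := by
    rw [hd, ha, div_le_div_iff₀ hyv hyu]
    have : δ * (y u + y v) ≤ x u * y v - x v * y u := by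
      calc δ * (y u + y v) ≤ δ₂ * (y u + y v) := by
            apply mul_le_mul_of_nonneg_right hδ₂le; linarith
        _ = x u * y v - x v * y u := by
            rw [hδ₂]; field_simp
    nlinarith
  have hab : a < b := by
    rw [ha, hb]
    apply div_lt_div_of_pos_right _ hyu
    linarith
  have hslt : sl θ c d < sl θ a b := sl_lt_sl hθ hc0 hcd hda hab
  have hDdiff : Dtheta θ x'' y - Dtheta θ x y = δ * (sl θ c d - sl θ a b) := by
    unfold Dtheta
    rw [← Finset.sum_sub_distrib]
    have hzero : ∀ w ∈ Finset.univ, w ∉ ({u, v} : Finset V) →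
        y w * θ (x'' w / y w) - y w * θ (x w / y w) = 0 := by
      intro w _ hw
      rw [Finset.mem_insert, Finset.mem_singleton] at hw
      push_neg at hw
      rw [hx''w w hw.1 hw.2, sub_self]
    rw [← Finset.sum_subset (Finset.subset_univ ({u, v} : Finset V)) hzero,
      Finset.sum_pair huv]
    rw [hx''u, hx''v]
    have e1 : y u * θ ((x u - δ) / y u) - y u * θ (x u / y u) = -(δ * sl θ a b) := by
      have h1 : (b - a) * sl θ a b = θ b - θ a := sl_mul θ (ne_of_lt hab)
      have h2 : y u * (b - a) = δ := by
        rw [hb, ha]; field_simp; ring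
      rw [← ha, ← hb]
      linear_combination y u * h1 - sl θ a b * h2
    have e2 : y v * θ ((x v + δ) / y v) - y v * θ (x v / y v) = δ * sl θ c d := by
      have h1 : (d - c) * sl θ c d = θ d - θ c := sl_mul θ (ne_of_lt hcd)
      have h2 : y v * (d - c) = δ := by
        rw [hd, hc]; field_simp; ring
      rw [← hc, ← hd]
      linear_combination (-(y v)) * h1 + sl θ c d * h2
    rw [e1, e2]
    ring
  have : δ * (sl θ c d - sl θ a b) < 0 :=
    mul_neg_of_pos_of_neg hδpos (by linarith)
  linarith

end DMAux

end DMAux6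

section DMAux7
set_option linter.unusedSectionVars false

variable {V : Type*} [Fintype V] [DecidableEq V]

namespace DMAux

set_option maxHeartbeats 1000000 in
/-- If `y`-constraints separating `u` (denser) from `v` all have slack, the divergence can
be strictly decreased by moving `y`-mass from `v` to `u`. -/
lemma perturb_y {f g : Finset V → ℝ} (hdm : DualModular f g) {θ : ℝ → ℝ}
    (hθ : StrictConvexOn ℝ (Set.Ici 0) θ) {x y : V → ℝ}
    (hxy : Allocation f g x y) (hy : ∀ w, 0 < y w) {u v : V}
    (hρ : x v / y v < x u / y u)
    (hslack : ∀ A : Finset V, u ∈ A → v ∉ A → ∑ w ∈ A, y w < g A) :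
    ∃ y'' : V → ℝ, Allocation f g x y'' ∧ Dtheta θ x y'' < Dtheta θ x y := by
  classical
  obtain ⟨hf, ⟨hy0, hyV, hyA⟩⟩ := hxy
  have huv : u ≠ v := by rintro rfl; exact lt_irrefl _ hρ
  have hyu := hy u
  have hyv := hy v
  have hx0 : ∀ w, 0 ≤ x w := hf.1
  have hxu : 0 < x u := by
    have h1 : 0 ≤ x v / y v := div_nonneg (hx0 v) (le_of_lt hyv)
    have h2 : 0 < x u / y u := lt_of_le_of_lt h1 hρ
    by_contra h
    push_neg at h
    have : x u / y u ≤ 0 := div_nonpos_of_nonpos_of_nonneg h (le_of_lt hyu)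
    linarith
  set 𝒜 : Finset (Finset V) := Finset.univ.filter (fun A => u ∈ A ∧ v ∉ A) with h𝒜
  have h𝒜ne : 𝒜.Nonempty := by
    refine ⟨{u}, ?_⟩
    rw [h𝒜, Finset.mem_filter]
    exact ⟨Finset.mem_univ _, Finset.mem_singleton_self u,
      fun h => huv (Finset.mem_singleton.mp h).symm⟩
  set ε : ℝ := 𝒜.inf' h𝒜ne (fun A => g A - ∑ w ∈ A, y w) with hε
  have hεpos : 0 < ε := by
    rw [hε, Finset.lt_inf'_iff]
    intro A hA
    rw [h𝒜, Finset.mem_filter] at hA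
    have := hslack A hA.2.1 hA.2.2
    linarith
  have hnum : 0 < x u * y v - x v * y u := by
    rw [div_lt_div_iff₀ hyv hyu] at hρ
    linarith
  set δ₂ : ℝ := (x u * y v - x v * y u) / (x u + x v) with hδ₂
  have hδ₂pos : 0 < δ₂ := div_pos hnum (by nlinarith [hx0 v])
  set δ : ℝ := min (min ε δ₂) (y v / 2) with hδ
  have hδpos : 0 < δ := lt_min (lt_min hεpos hδ₂pos) (by linarith)
  have hδε : δ ≤ ε := le_trans (min_le_left _ _) (min_le_left _ _)
  have hδ₂le : δ ≤ δ₂ := le_trans (min_le_left _ _) (min_le_right _ _)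
  have hδyv : δ < y v := lt_of_le_of_lt (min_le_right _ _) (by linarith)
  set y'' : V → ℝ := fun w => y w + (if w = u then δ else 0) - (if w = v then δ else 0)
    with hy''
  have hy''u : y'' u = y u + δ := by rw [hy'']; simp [huv]
  have hy''v : y'' v = y v - δ := by rw [hy'']; simp [Ne.symm huv]
  have hy''w : ∀ w, w ≠ u → w ≠ v → y'' w = y w := by
    intro w h1 h2; rw [hy'']; simp [h1, h2]
  have hsum : ∀ A : Finset V, ∑ w ∈ A, y'' w
      = ∑ w ∈ A, y w + (if u ∈ A then δ else 0) - (if v ∈ A then δ else 0) := by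
    intro A
    rw [hy'']
    rw [Finset.sum_sub_distrib, Finset.sum_add_distrib]
    congr 1
    · congr 1
      exact Finset.sum_ite_eq' A u (fun _ => δ)
    · exact Finset.sum_ite_eq' A v (fun _ => δ)
  have halloc : Allocation f g x y'' := by
    refine ⟨hf, ?_, ?_, ?_⟩
    · intro w
      rcases eq_or_ne w u with h1 | h1
      · rw [h1, hy''u]; linarith
      rcases eq_or_ne w v with h2 | h2
      · rw [h2, hy''v]; linarith
      · rw [hy''w w h1 h2]; exact le_of_lt (hy w)
    · rw [hsum Finset.univ]
      simp only [Finset.mem_univ, if_true]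
      rw [hyV]; ring
    · intro A
      rw [hsum A]
      by_cases h1 : u ∈ A <;> by_cases h2 : v ∈ A <;>
        simp only [h1, h2, if_true, if_false]
      · have := hyA A; linarith
      · have hAmem : A ∈ 𝒜 := by
          rw [h𝒜, Finset.mem_filter]; exact ⟨Finset.mem_univ _, h1, h2⟩
        have : ε ≤ g A - ∑ w ∈ A, y w := Finset.inf'_le _ hAmem
        linarith
      · have := hyA A; linarith
      · have := hyA A; linarith
  clear_value δ ε δ₂
  refine ⟨y'', halloc, ?_⟩
  -- the strict decrease
  have hyvδ : 0 < y v - δ := by linarith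
  set a : ℝ := x u / (y u + δ) with ha
  set b : ℝ := x u / y u with hb
  set c : ℝ := x v / y v with hc
  set d : ℝ := x v / (y v - δ) with hd
  clear_value a b c d
  have hc0 : 0 ≤ c := by rw [hc]; exact div_nonneg (hx0 v) (le_of_lt hyv)
  have ha0 : 0 < a := by rw [ha]; exact div_pos hxu (by linarith)
  have hab : a < b := by
    rw [ha, hb]
    exact div_lt_div_of_pos_left hxu hyu (by linarith)
  have hda : d ≤ a := by
    rw [hd, ha, div_le_div_iff₀ hyvδ (by linarith : (0:ℝ) < y u + δ)]
    have h1 : δ * (x u + x v) ≤ x u * y v - x v * y u := by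
      calc δ * (x u + x v) ≤ δ₂ * (x u + x v) := by
            apply mul_le_mul_of_nonneg_right hδ₂le
            nlinarith [hx0 v]
        _ = x u * y v - x v * y u := by
            rw [hδ₂, div_mul_cancel₀]
            exact ne_of_gt (by nlinarith [hx0 v])
    nlinarith
  have hca : c < a := by
    rcases eq_or_lt_of_le (hx0 v) with hxv | hxv
    · rw [hc, ← hxv, zero_div]; exact ha0
    · have hcd : c < d := by
        rw [hc, hd]
        exact div_lt_div_of_pos_left hxv hyvδ (by linarith)
      linarith
  have hcb : c < b := lt_trans hca hab
  set s₁ : ℝ := sl θ a b with hs₁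
  set s₂ : ℝ := if x v = 0 then 0 else sl θ c d with hs₂
  clear_value s₁ s₂
  have h1 : sl θ c b < s₁ := by
    rw [hs₁]
    exact sl_lt_left hθ hc0 hca hab
  have h2 : c * s₂ ≤ c * s₁ := by
    by_cases hxv : x v = 0
    · have hc0' : c = 0 := by rw [hc, hxv, zero_div]
      rw [hc0']; ring_nf; exact le_refl _
    · have hxvpos : 0 < x v := lt_of_le_of_ne (hx0 v) (Ne.symm hxv)
      have hcd : c < d := by
        rw [hc, hd]
        exact div_lt_div_of_pos_left hxvpos hyvδ (by linarith)
      have hsle : s₂ ≤ s₁ := by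
        rw [hs₂, if_neg hxv, hs₁]
        exact sl_le_sl hθ.convexOn hc0 hcd hda hab
      exact mul_le_mul_of_nonneg_left hsle hc0
  have h3 : (b - c) * sl θ c b = θ b - θ c := sl_mul θ (ne_of_lt hcb)
  have hkey : θ b - b * s₁ < θ c - c * s₂ := by nlinarith [h1, h2, h3, hcb]
  have hDdiff : Dtheta θ x y'' - Dtheta θ x y
      = δ * ((θ b - b * s₁) - (θ c - c * s₂)) := by
    unfold Dtheta
    rw [← Finset.sum_sub_distrib]
    have hzero : ∀ w ∈ Finset.univ, w ∉ ({u, v} : Finset V) →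
        y'' w * θ (x w / y'' w) - y w * θ (x w / y w) = 0 := by
      intro w _ hw
      rw [Finset.mem_insert, Finset.mem_singleton] at hw
      push_neg at hw
      rw [hy''w w hw.1 hw.2, sub_self]
    rw [← Finset.sum_subset (Finset.subset_univ ({u, v} : Finset V)) hzero,
      Finset.sum_pair huv]
    rw [hy''u, hy''v]
    have e1 : (y u + δ) * θ (x u / (y u + δ)) - y u * θ (x u / y u)
        = δ * (θ b - b * s₁) := by
      rw [← ha, ← hb]
      have h1' : (b - a) * s₁ = θ b - θ a := by rw [hs₁]; exact sl_mul θ (ne_of_lt hab)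
      have h2' : (y u + δ) * (b - a) = δ * b := by
        rw [ha, hb]; field_simp; ring
      linear_combination (y u + δ) * h1' - s₁ * h2'
    have e2 : (y v - δ) * θ (x v / (y v - δ)) - y v * θ (x v / y v)
        = δ * (c * s₂ - θ c) := by
      rw [← hc, ← hd]
      by_cases hxv : x v = 0
      · have hc0' : c = 0 := by rw [hc, hxv, zero_div]
        have hd0' : d = 0 := by rw [hd, hxv, zero_div]
        rw [hc0', hd0']
        ring
      · have hxvpos : 0 < x v := lt_of_le_of_ne (hx0 v) (Ne.symm hxv)
        have hcd : c < d := by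
          rw [hc, hd]
          exact div_lt_div_of_pos_left hxvpos hyvδ (by linarith)
        have hs₂' : s₂ = sl θ c d := by rw [hs₂, if_neg hxv]
        have h1' : (d - c) * sl θ c d = θ d - θ c := sl_mul θ (ne_of_lt hcd)
        have h2' : (y v - δ) * (d - c) = δ * c := by
          rw [hc, hd]; field_simp; ring
        rw [hs₂']
        linear_combination (-(y v - δ)) * h1' + sl θ c d * h2'
    rw [e1, e2]
    ring
  have : δ * ((θ b - b * s₁) - (θ c - c * s₂)) < 0 :=
    mul_neg_of_pos_of_neg hδpos (by linarith)
  linarith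

end DMAux

end DMAux7

section DMAux8
set_option linter.unusedSectionVars false

variable {V : Type*} [Fintype V] [DecidableEq V]

namespace DMAux

/-- Every minimizer of `D_θ` for strictly convex `θ` is locally maximin. -/
lemma min_maximin {f g : Finset V → ℝ} (hdm : DualModular f g) {θ : ℝ → ℝ}
    (hθ : StrictConvexOn ℝ (Set.Ici 0) θ) {x y : V → ℝ} (hxy : Allocation f g x y)
    (hmin : ∀ x' y' : V → ℝ, Allocation f g x' y' → Dtheta θ x y ≤ Dtheta θ x' y') :
    LocallyMaximin f g x y := by
  intro ρ hρpos
  have hy : ∀ w, 0 < y w := y_pos hdm.g_strictMono hxy.2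
  set S := Finset.univ.filter (fun v => ρ ≤ x v / y v) with hSdef
  have hdens : ∀ u ∈ S, ∀ v, v ∉ S → x v / y v < x u / y u := by
    intro u hu v hv
    rw [hSdef, Finset.mem_filter] at hu
    have h2 : ¬ ρ ≤ x v / y v := by
      intro h
      exact hv (by rw [hSdef, Finset.mem_filter]; exact ⟨Finset.mem_univ _, h⟩)
    have := lt_of_not_ge h2
    linarith [hu.2]
  constructor
  · -- x-tightness of S
    by_contra hne
    have hlt : f S < ∑ w ∈ S, x w :=
      lt_of_le_of_ne (hxy.1.2.2 S) (fun h => hne h.symm)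
    obtain ⟨u, hu, v, hv, hslack⟩ :=
      exists_exchange_x hdm.f_supermodular hdm.f_empty hxy.1.2.1 hxy.1.2.2 hlt
    obtain ⟨x'', hall, hdec⟩ := perturb_x hdm hθ hxy hy (hdens u hu v hv) hslack
    have := hmin x'' y hall
    linarith
  · -- y-tightness of S
    by_contra hne
    have hlt : ∑ w ∈ S, y w < g S := lt_of_le_of_ne (hxy.2.2.2 S) hne
    obtain ⟨u, hu, v, hv, hslack⟩ :=
      exists_exchange_y hdm.g_submodular hdm.g_empty hxy.2.2.1 hxy.2.2.2 hlt
    obtain ⟨y'', hall, hdec⟩ := perturb_y hdm hθ hxy hy (hdens u hu v hv) hslack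
    have := hmin x y'' hall
    linarith

end DMAux

end DMAux8
/-- Theorem 1.4: for strictly convex `θ`, an allocation minimizes
`D_θ` iff it is locally maximin; for merely convex `θ`, every locally maximin
allocation is a minimizer. -/
theorem convex_program_iff_locally_maximin (f g : Finset V → ℝ)
    (hdm : DualModular f g) (θ : ℝ → ℝ) :
    (StrictConvexOn ℝ (Set.Ici 0) θ →
      ∀ x y : V → ℝ, Allocation f g x y →
        ((∀ x' y' : V → ℝ, Allocation f g x' y' → Dtheta θ x y ≤ Dtheta θ x' y') ↔
          LocallyMaximin f g x y)) ∧
    (ConvexOn ℝ (Set.Ici 0) θ →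
      ∀ x y : V → ℝ, Allocation f g x y → LocallyMaximin f g x y →
        ∀ x' y' : V → ℝ, Allocation f g x' y' → Dtheta θ x y ≤ Dtheta θ x' y') := by
  constructor
  · intro hθs x y hxy
    constructor
    · intro hmin
      exact DMAux.min_maximin hdm hθs hxy hmin
    · intro hlm x' y' hxy'
      exact DMAux.maximin_min hdm hθs.convexOn hxy hlm hxy'
  · intro hθ x y hxy hlm x' y' hxy'
    exact DMAux.maximin_min hdm hθ hxy hlm hxy'
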